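/- For all schemas σ₁ and σ₂, the table compatibility judgment Table(σ₁) ~ Table(σ₂) is derivable if and only if there exists a schema σ such that Table(σ) <: Table(σ₁) and Table(σ) <: Table(σ₂). In particular, if Table(σ₁) and Table(σ₂) are incompatible, then no table type is a subtype of both (no refinement of Table(σ₁) is a subtype of Table(σ₂)). -/

import Mathlib

/-- Column types in the refinement type system. -/
inductive ColTy where
  | top | quantitative | qualitative | discrete | continuous
  | nominal | ordinal | temporal
deriving DecidableEq

/-- The subtyping axioms on column types. -/
inductive ColSubAx : ColTy → ColTy → Prop where
  | quant_top : ColSubAx .quantitative .top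
  | qual_top  : ColSubAx .qualitative .top
  | disc_quant : ColSubAx .discrete .quantitative
  | cont_quant : ColSubAx .continuous .quantitative
  | nom_qual  : ColSubAx .nominal .qualitative
  | ord_qual  : ColSubAx .ordinal .qualitative
  | temp_qual : ColSubAx .temporal .qualitative

/-- Column subtyping: the reflexive-transitive closure of the axioms. -/
def ColSub : ColTy → ColTy → Prop := Relation.ReflTransGen ColSubAx

/-- Two column types are compatible iff one is a subtype of the other. -/
def ColCompat (β₁ β₂ : ColTy) : Prop := ColSub β₁ β₂ ∨ ColSub β₂ β₁

/-- A schema is a finite partial map from column names to column types. -/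
abbrev Schema := Finmap (fun _ : String => ColTy)

/-- Table subtyping (a table type `Table σ` is determined by its schema `σ`;
    since `Finmap` is quotiented by permutation, the permutation rule is implicit). -/
inductive TableSub : Schema → Schema → Prop where
  | width (σ₁ σ₂ : Schema) :
      (∀ c τ, σ₂.lookup c = some τ → σ₁.lookup c = some τ) → TableSub σ₁ σ₂
  | depth (σ₁ σ₂ : Schema) :
      σ₁.keys = σ₂.keys →
      (∀ c τ₁ τ₂, σ₁.lookup c = some τ₁ → σ₂.lookup c = some τ₂ → ColSub τ₁ τ₂) →
      TableSub σ₁ σ₂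
  | trans {σ₁ σ₂ σ₃ : Schema} : TableSub σ₁ σ₂ → TableSub σ₂ σ₃ → TableSub σ₁ σ₃

/-- Table compatibility: every shared column's types are compatible. -/
def TableCompat (σ₁ σ₂ : Schema) : Prop :=
  ∀ c τ₁ τ₂, σ₁.lookup c = some τ₁ → σ₂.lookup c = some τ₂ → ColCompat τ₁ τ₂

instance : Fintype ColTy :=
  ⟨⟨↑[ColTy.top, .quantitative, .qualitative, .discrete, .continuous, .nominal, .ordinal,
      .temporal], by decide⟩, fun x => by cases x <;> decide⟩

def colLe : ColTy → ColTy → Bool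
  | _, .top => true
  | a, .quantitative => a = .quantitative || a = .discrete || a = .continuous
  | a, .qualitative => a = .qualitative || a = .nominal || a = .ordinal || a = .temporal
  | a, b => a = b

lemma colSub_of_colLe {a b : ColTy} (h : colLe a b = true) : ColSub a b := by
  cases a <;> cases b <;> simp only [colLe] at h <;>
    first
    | exact Relation.ReflTransGen.refl
    | exact Relation.ReflTransGen.single (by constructor)
    | exact Relation.ReflTransGen.tail (Relation.ReflTransGen.single (by constructor))
        (by constructor)
    | exact absurd h (by decide)

lemma colLe_of_colSub {a b : ColTy} (h : ColSub a b) : colLe a b = true := by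
  induction h with
  | refl => cases a <;> rfl
  | tail _ ax ih => cases ax <;> cases a <;> revert ih <;> decide

lemma colLe_chain : ∀ a b c : ColTy, colLe a b = true → colLe a c = true →
    colLe b c = true ∨ colLe c b = true := by decide

/-- Build a schema from a finite set of keys and a total value function. -/
def mkSchema (s : Finset String) (f : String → ColTy) : Schema :=
  ⟨s.val.map (fun c => (⟨c, f c⟩ : Sigma fun _ : String => ColTy)), by
    rw [← Multiset.nodup_keys]
    simpa [Multiset.keys] using s.nodup⟩

lemma mkSchema_lookup_eq {s : Finset String} {f : String → ColTy} {c : String}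
    (h : c ∈ s) : (mkSchema s f).lookup c = some (f c) :=
  Finmap.lookup_eq_some_iff.mpr (Multiset.mem_map.mpr ⟨c, h, rfl⟩)

lemma mkSchema_lookup_some {s : Finset String} {f : String → ColTy} {c : String} {τ : ColTy}
    (h : (mkSchema s f).lookup c = some τ) : c ∈ s ∧ τ = f c := by
  rcases Multiset.mem_map.mp (Finmap.lookup_eq_some_iff.mp h) with ⟨a, ha, heq⟩
  obtain ⟨rfl, h2⟩ := Sigma.mk.inj_iff.mp heq
  exact ⟨ha, (eq_of_heq h2).symm⟩

lemma mkSchema_keys (s : Finset String) (f : String → ColTy) :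
    (mkSchema s f).keys = s := by
  ext c
  simp [mkSchema, Finmap.keys, Multiset.keys]

lemma tableSub_sound {σ σ' : Schema} (h : TableSub σ σ') :
    ∀ c τ', σ'.lookup c = some τ' → ∃ τ, σ.lookup c = some τ ∧ ColSub τ τ' := by
  induction h with
  | width σ₁ σ₂ h => exact fun c τ' hc => ⟨τ', h c τ' hc, Relation.ReflTransGen.refl⟩
  | depth σ₁ σ₂ hk h =>
      intro c τ' hc
      have hmem : c ∈ σ₁ := by
        rw [← Finmap.mem_keys, hk, Finmap.mem_keys]
        exact Finmap.mem_of_lookup_eq_some hc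
      obtain ⟨τ, hτ⟩ := Option.isSome_iff_exists.mp (Finmap.lookup_isSome.mpr hmem)
      exact ⟨τ, hτ, h c τ τ' hτ hc⟩
  | trans _ _ ih₁ ih₂ =>
      intro c τ' hc
      obtain ⟨τm, hm, hsub⟩ := ih₂ c τ' hc
      obtain ⟨τ, hτ, hsub'⟩ := ih₁ c τm hm
      exact ⟨τ, hτ, hsub'.trans hsub⟩

/-- The meet-like value function for the common subtype. -/
def meetFun (σ₁ σ₂ : Schema) (c : String) : ColTy :=
  match σ₁.lookup c, σ₂.lookup c with
  | some τ₁, some τ₂ => if colLe τ₁ τ₂ then τ₁ else τ₂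
  | some τ₁, none => τ₁
  | none, some τ₂ => τ₂
  | none, none => .top

lemma common_sub_left {σ₁ σ₂ : Schema} (h : TableCompat σ₁ σ₂) :
    TableSub (mkSchema (σ₁.keys ∪ σ₂.keys) (meetFun σ₁ σ₂)) σ₁ := by
  refine TableSub.trans (σ₂ := mkSchema σ₁.keys (meetFun σ₁ σ₂)) ?_ ?_
  · refine TableSub.width _ _ fun c τ hc => ?_
    obtain ⟨hm, rfl⟩ := mkSchema_lookup_some hc
    exact mkSchema_lookup_eq (Finset.mem_union_left _ hm)
  · refine TableSub.depth _ _ (mkSchema_keys _ _) fun c τ τ₁ hc h₁ => ?_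
    obtain ⟨hm, rfl⟩ := mkSchema_lookup_some hc
    apply colSub_of_colLe
    unfold meetFun
    rw [h₁]
    cases h₂ : σ₂.lookup c with
    | none => simp [colLe_of_colSub (Relation.ReflTransGen.refl)]
    | some τ₂ =>
        show colLe (if colLe τ₁ τ₂ = true then τ₁ else τ₂) τ₁ = true
        by_cases hb : colLe τ₁ τ₂ = true
        · rw [if_pos hb]; exact colLe_of_colSub Relation.ReflTransGen.refl
        · rw [if_neg hb]
          rcases h c τ₁ τ₂ h₁ h₂ with hcc | hcc
          · exact absurd (colLe_of_colSub hcc) hb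
          · exact colLe_of_colSub hcc

lemma common_sub_right {σ₁ σ₂ : Schema} (h : TableCompat σ₁ σ₂) :
    TableSub (mkSchema (σ₁.keys ∪ σ₂.keys) (meetFun σ₁ σ₂)) σ₂ := by
  refine TableSub.trans (σ₂ := mkSchema σ₂.keys (meetFun σ₁ σ₂)) ?_ ?_
  · refine TableSub.width _ _ fun c τ hc => ?_
    obtain ⟨hm, rfl⟩ := mkSchema_lookup_some hc
    exact mkSchema_lookup_eq (Finset.mem_union_right _ hm)
  · refine TableSub.depth _ _ (mkSchema_keys _ _) fun c τ τ₂ hc h₂ => ?_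
    obtain ⟨hm, rfl⟩ := mkSchema_lookup_some hc
    apply colSub_of_colLe
    unfold meetFun
    rw [h₂]
    cases h₁ : σ₁.lookup c with
    | none => exact colLe_of_colSub Relation.ReflTransGen.refl
    | some τ₁ =>
        show colLe (if colLe τ₁ τ₂ = true then τ₁ else τ₂) τ₂ = true
        by_cases hb : colLe τ₁ τ₂ = true
        · rw [if_pos hb]; exact hb
        · rw [if_neg hb]; exact colLe_of_colSub Relation.ReflTransGen.refl

/-- Two table types are compatible iff they have a common subtype; in particular,
    incompatible table types have no common subtype. -/
theorem tableCompat_iff_exists_common_subtype :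
    (∀ σ₁ σ₂ : Schema,
      TableCompat σ₁ σ₂ ↔ ∃ σ : Schema, TableSub σ σ₁ ∧ TableSub σ σ₂) ∧
    (∀ σ₁ σ₂ : Schema, ¬ TableCompat σ₁ σ₂ →
      ∀ σ : Schema, ¬ (TableSub σ σ₁ ∧ TableSub σ σ₂)) := by
  have main : ∀ σ₁ σ₂ : Schema,
      TableCompat σ₁ σ₂ ↔ ∃ σ : Schema, TableSub σ σ₁ ∧ TableSub σ σ₂ := by
    intro σ₁ σ₂
    constructor
    · intro h
      exact ⟨mkSchema (σ₁.keys ∪ σ₂.keys) (meetFun σ₁ σ₂),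
        common_sub_left h, common_sub_right h⟩
    · rintro ⟨σ, hs₁, hs₂⟩ c τ₁ τ₂ h₁ h₂
      obtain ⟨τ, hτ, hsub₁⟩ := tableSub_sound hs₁ c τ₁ h₁
      obtain ⟨τ', hτ', hsub₂⟩ := tableSub_sound hs₂ c τ₂ h₂
      rw [hτ] at hτ'
      obtain rfl : τ = τ' := Option.some_injective _ hτ'
      rcases colLe_chain τ τ₁ τ₂ (colLe_of_colSub hsub₁) (colLe_of_colSub hsub₂) with hcc | hcc
      · exact Or.inl (colSub_of_colLe hcc)
      · exact Or.inr (colSub_of_colLe hcc)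
  refine ⟨main, fun σ₁ σ₂ hn σ hσ => hn ((main σ₁ σ₂).mpr ⟨σ, hσ⟩)⟩
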